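/- With n = 3 and k = 6 (the 11-dimensional lens space L₃¹¹ = S¹¹/ℤ₃): (ηRS(3,6,1) − ηRS(3,6,0)) − 2·(ηD(3,6,1) − ηD(3,6,0)) = 1/3. (This is the value 1/3 ∈ ℝ/ℤ of the type IIB duality anomaly on the generator L₃¹¹ of the ℤ₂₇ factor of the bordism group Ω₁₁^{Spin-GL⁺(2,ℤ)}.) -/

import Mathlib

open scoped BigOperators

/-- The Atiyah–Patodi–Singer eta invariant of the charge-`q` Dirac operator on the
lens space `L_n^{2k-1} = S^{2k-1}/ℤ_n`. -/
noncomputable def etaD (n k : ℕ) (q : ℤ) : ℂ :=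
  -(1 / ((n : ℂ) * Complex.I ^ k)) *
    ∑ j ∈ Finset.Icc 1 (n - 1),
      Complex.exp (-(2 * (Real.pi : ℂ) * Complex.I * (q : ℂ) * (j : ℂ)) / (n : ℂ)) /
        (2 * ((Real.sin (Real.pi * (j : ℝ) / (n : ℝ)) : ℝ) : ℂ)) ^ k

/-- The Atiyah–Patodi–Singer eta invariant of the charge-`q` Rarita–Schwinger operator on the
lens space `L_n^{2k-1} = S^{2k-1}/ℤ_n`. -/
noncomputable def etaRS (n k : ℕ) (q : ℤ) : ℂ :=
  -(1 / ((n : ℂ) * Complex.I ^ k)) *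
    ∑ j ∈ Finset.Icc 1 (n - 1),
      Complex.exp (-(2 * (Real.pi : ℂ) * Complex.I * (q : ℂ) * (j : ℂ)) / (n : ℂ)) *
        (2 * (k : ℂ) * ((Real.cos (2 * Real.pi * (j : ℝ) / (n : ℝ)) : ℝ) : ℂ) - 1) /
        (2 * ((Real.sin (Real.pi * (j : ℝ) / (n : ℝ)) : ℝ) : ℂ)) ^ k

lemma expval (r : ℝ) :
    Complex.exp ((r : ℂ) * Complex.I) = (Real.cos r : ℂ) + (Real.sin r : ℂ) * Complex.I := by
  rw [Complex.exp_mul_I, Complex.ofReal_cos, Complex.ofReal_sin]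

/-- The type IIB duality anomaly on the generator `L₃¹¹` of the `ℤ₂₇` factor of
`Ω₁₁^{Spin-GL⁺(2,ℤ)}` equals `1/3`. -/
theorem anomaly_L3_11 :
    (etaRS 3 6 1 - etaRS 3 6 0) - 2 * (etaD 3 6 1 - etaD 3 6 0) = 1 / 3 := by
  have h12 : Finset.Icc 1 (3 - 1) = ({1, 2} : Finset ℕ) := by decide
  have s1 : Real.sin (Real.pi * (1 : ℕ) / (3 : ℕ)) = Real.sqrt 3 / 2 := by
    norm_num [mul_comm Real.pi, ← Real.sin_pi_div_three]
  have s2 : Real.sin (Real.pi * (2 : ℕ) / (3 : ℕ)) = Real.sqrt 3 / 2 := by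
    have : Real.pi * (2 : ℕ) / (3 : ℕ) = Real.pi - Real.pi / 3 := by push_cast; ring
    rw [this, Real.sin_pi_sub, Real.sin_pi_div_three]
  have c1 : Real.cos (2 * Real.pi * (1 : ℕ) / (3 : ℕ)) = -(1 / 2) := by
    have : 2 * Real.pi * (1 : ℕ) / (3 : ℕ) = Real.pi - Real.pi / 3 := by push_cast; ring
    rw [this, Real.cos_pi_sub, Real.cos_pi_div_three]
  have c2 : Real.cos (2 * Real.pi * (2 : ℕ) / (3 : ℕ)) = -(1 / 2) := by
    have : 2 * Real.pi * (2 : ℕ) / (3 : ℕ) = Real.pi + Real.pi / 3 := by push_cast; ring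
    rw [this]
    simp [Real.cos_add, Real.cos_pi_div_three]
  have e1 : Complex.exp (-(2 * (Real.pi : ℂ) * Complex.I * ((1:ℤ) : ℂ) * ((1:ℕ) : ℂ)) / (3:ℕ)) =
      (Real.cos (-(2 * Real.pi) / 3) : ℂ) + (Real.sin (-(2 * Real.pi) / 3) : ℂ) * Complex.I := by
    rw [← expval]
    congr 1
    push_cast
    ring
  have e2 : Complex.exp (-(2 * (Real.pi : ℂ) * Complex.I * ((1:ℤ) : ℂ) * ((2:ℕ) : ℂ)) / (3:ℕ)) =
      (Real.cos (-(4 * Real.pi) / 3) : ℂ) + (Real.sin (-(4 * Real.pi) / 3) : ℂ) * Complex.I := by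
    rw [← expval]
    congr 1
    push_cast
    ring
  have cv1 : Real.cos (-(2 * Real.pi) / 3) = -(1 / 2) := by
    have : -(2 * Real.pi) / 3 = -(Real.pi - Real.pi / 3) := by ring
    rw [this, Real.cos_neg, Real.cos_pi_sub, Real.cos_pi_div_three]
  have cv2 : Real.cos (-(4 * Real.pi) / 3) = -(1 / 2) := by
    have : -(4 * Real.pi) / 3 = -(Real.pi + Real.pi / 3) := by ring
    rw [this, Real.cos_neg]
    simp [Real.cos_add, Real.cos_pi_div_three]
  have sv1 : Real.sin (-(2 * Real.pi) / 3) = -(Real.sqrt 3 / 2) := by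
    have : -(2 * Real.pi) / 3 = -(Real.pi - Real.pi / 3) := by ring
    rw [this, Real.sin_neg, Real.sin_pi_sub, Real.sin_pi_div_three]
  have sv2 : Real.sin (-(4 * Real.pi) / 3) = Real.sqrt 3 / 2 := by
    have : -(4 * Real.pi) / 3 = -(Real.pi + Real.pi / 3) := by ring
    rw [this, Real.sin_neg]
    simp [Real.sin_add, Real.sin_pi_div_three]
  have hs6 : ((Real.sqrt 3 : ℂ)) ^ 2 = 3 := by
    rw [← Complex.ofReal_pow, Real.sq_sqrt (by norm_num : (3:ℝ) ≥ 0)]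
    norm_num
  simp only [etaD, etaRS, h12, Finset.sum_insert (by decide : (1:ℕ) ∉ ({2} : Finset ℕ)),
    Finset.sum_singleton, s1, s2, c1, c2, e1, e2, cv1, cv2, sv1, sv2,
    Int.cast_zero, Int.cast_one, mul_zero, zero_mul, mul_one, neg_zero, zero_div, Complex.exp_zero]
  push_cast
  have hI : Complex.I ^ 6 = -1 := by
    have := Complex.I_sq
    rw [show (6:ℕ) = 2*3 by rfl, pow_mul, Complex.I_sq]
    ring
  rw [Complex.I_sq]
  have e1' : Complex.exp ((Real.pi:ℂ) * Complex.I * (-2 / 3)) =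
      -(1/2 : ℂ) - (Real.sqrt 3 : ℂ) / 2 * Complex.I := by
    rw [show (Real.pi:ℂ) * Complex.I * (-2/3) = ((-(2*Real.pi)/3 : ℝ):ℂ) * Complex.I by
      push_cast; ring, expval, cv1, sv1]
    push_cast; ring
  have e2' : Complex.exp ((Real.pi:ℂ) * Complex.I * (-4 / 3)) =
      -(1/2 : ℂ) + (Real.sqrt 3 : ℂ) / 2 * Complex.I := by
    rw [show (Real.pi:ℂ) * Complex.I * (-4/3) = ((-(4*Real.pi)/3 : ℝ):ℂ) * Complex.I by
      push_cast; ring, expval, cv2, sv2]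
    push_cast; ring
  have h3 : (Real.sqrt 3 : ℂ) ≠ 0 := by
    simp [Real.sqrt_eq_zero']
  field_simp
  ring_nf
  rw [e1', e2']
  field_simp
  ring_nf
  have h27 : (Real.sqrt 3 : ℂ) ^ 6 = 27 := by
    rw [show (6:ℕ) = 2 * 3 from rfl, pow_mul, hs6]; norm_num
  have hp : (Real.sqrt 3 : ℂ) ^ 30 * ((Real.sqrt 3 : ℂ)⁻¹) ^ 36 = ((Real.sqrt 3 : ℂ) ^ 6)⁻¹ := by
    field_simp
  rw [h27]
  norm_num
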